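/- Neither the Murty graph nor the graph K4 ⊙ K33 contains a conformal bicycle. -/

import Mathlib

open SimpleGraph

variable {V : Type*}

/-- A conformal bicycle: two vertex-disjoint cycles whose complement
(in the vertex set) induces a subgraph having a perfect matching. -/
def IsConformalBicycle (G : SimpleGraph V) {a b : V} (c₁ : G.Walk a a) (c₂ : G.Walk b b) : Prop :=
  c₁.IsCycle ∧ c₂.IsCycle ∧ (∀ x ∈ c₁.support, x ∉ c₂.support) ∧
    ∃ M : G.Subgraph, M.IsMatching ∧ M.verts = {v | v ∉ c₁.support ∧ v ∉ c₂.support}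

def HasConformalBicycle (G : SimpleGraph V) : Prop :=
  ∃ (a b : V) (c₁ : G.Walk a a) (c₂ : G.Walk b b), IsConformalBicycle G c₁ c₂

def HasOddConformalBicycle (G : SimpleGraph V) : Prop :=
  ∃ (a b : V) (c₁ : G.Walk a a) (c₂ : G.Walk b b),
    IsConformalBicycle G c₁ c₂ ∧ Odd c₁.length ∧ Odd c₂.length

def HasEvenConformalBicycle (G : SimpleGraph V) : Prop :=
  ∃ (a b : V) (c₁ : G.Walk a a) (c₂ : G.Walk b b),
    IsConformalBicycle G c₁ c₂ ∧ Even c₁.length ∧ Even c₂.length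

/-- The Murty graph, with a1=0, a2=1, b1=2, b2=3, b3=4, t1=5, t2=6, t3=7. -/
def murtyGraph : SimpleGraph (Fin 8) :=
  SimpleGraph.fromRel (fun a b =>
    (a, b) ∈ [((0 : Fin 8), (2 : Fin 8)), (0, 3), (0, 4), (1, 2), (1, 3), (1, 4), (0, 1),
      (2, 5), (3, 6), (4, 7), (5, 6), (6, 7), (7, 5)])

/-- The graph K4 ⊙ K33: the Murty graph minus the edge a1a2. -/
def K4spliceK33 : SimpleGraph (Fin 8) :=
  SimpleGraph.fromRel (fun a b =>
    (a, b) ∈ [((0 : Fin 8), (2 : Fin 8)), (0, 3), (0, 4), (1, 2), (1, 3), (1, 4),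
      (2, 5), (3, 6), (4, 7), (5, 6), (6, 7), (7, 5)])


set_option synthInstance.maxSize 5000
set_option synthInstance.maxHeartbeats 2000000
set_option maxRecDepth 100000

namespace CBAux

open Finset




/-! ### Generic cycle lemmas -/

variable {V : Type*} [DecidableEq V] {G : SimpleGraph V}

lemma support_eq_map {u v : V} (c : G.Walk u v) :
    c.support = (List.range (c.length + 1)).map c.getVert := by
  induction c with
  | nil => simp [List.range_succ]
  | cons h p ih =>
    rw [Walk.support_cons, ih]
    conv_rhs => rw [Walk.length_cons, List.range_succ_eq_map, List.map_cons, List.map_map]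
    congr 1

variable {a : V} {c : G.Walk a a} (hc : c.IsCycle)

include hc

lemma len_pos : 0 < c.length := by have := hc.three_le_length; omega

lemma support_toFinset_eq :
    c.support.toFinset = (Finset.range c.length).image c.getVert := by
  have h0 : (0:ℕ) ∈ Finset.range c.length := by
    simpa using len_pos hc
  ext v
  simp only [List.mem_toFinset, support_eq_map c, List.mem_map, List.mem_range,
    Finset.mem_image, Finset.mem_range]
  constructor
  · rintro ⟨i, hi, rfl⟩
    rcases Nat.lt_or_ge i c.length with h | h
    · exact ⟨i, h, rfl⟩
    · have : i = c.length := by omega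
      subst this
      exact ⟨0, Finset.mem_range.1 h0, by rw [Walk.getVert_length, Walk.getVert_zero]⟩
  · rintro ⟨i, hi, rfl⟩
    exact ⟨i, by omega, rfl⟩

lemma getVert_injOn :
    ∀ i < c.length, ∀ j < c.length, c.getVert i = c.getVert j → i = j := by
  have htail : c.support.tail = (List.range c.length).map (fun i => c.getVert (i+1)) := by
    rw [support_eq_map c, List.range_succ_eq_map, List.map_cons, List.tail_cons, List.map_map]
    rfl
  have hnd := hc.support_nodup
  rw [htail] at hnd
  have hinj := List.inj_on_of_nodup_map hnd
  simp only [List.mem_range] at hinj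
  -- hinj : ∀ i < len, ∀ j < len, getVert (i+1) = getVert (j+1) → i = j
  have key : ∀ i ≤ c.length, ∀ j ≤ c.length, 0 < i → 0 < j →
      c.getVert i = c.getVert j → i = j := by
    intro i hi j hj hi0 hj0 h
    obtain ⟨i', rfl⟩ := Nat.exists_eq_add_of_lt hi0
    obtain ⟨j', rfl⟩ := Nat.exists_eq_add_of_lt hj0
    simp only [Nat.zero_add] at *
    have := hinj (show i' < c.length by omega) (show j' < c.length by omega) h
    omega
  intro i hi j hj h
  rcases Nat.eq_zero_or_pos i with rfl | hi0
  · rcases Nat.eq_zero_or_pos j with rfl | hj0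
    · rfl
    · exfalso
      have h0 : c.getVert c.length = c.getVert j := by
        rw [Walk.getVert_length, ← h, Walk.getVert_zero]
      have := key c.length le_rfl j (le_of_lt hj) (len_pos hc) hj0 h0
      omega
  · rcases Nat.eq_zero_or_pos j with rfl | hj0
    · exfalso
      have h0 : c.getVert i = c.getVert c.length := by
        rw [Walk.getVert_length, h, Walk.getVert_zero]
      have := key i (le_of_lt hi) c.length le_rfl hi0 (len_pos hc) h0
      omega
    · exact key i (le_of_lt hi) j (le_of_lt hj) hi0 hj0 h

lemma adj_getVert_cyc : ∀ i < c.length, G.Adj (c.getVert i) (c.getVert ((i+1) % c.length)) := by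
  intro i hi
  rcases Nat.lt_or_ge (i+1) c.length with h | h
  · rw [Nat.mod_eq_of_lt h]
    exact c.adj_getVert_succ hi
  · have hin : i + 1 = c.length := by omega
    have : (i+1) % c.length = 0 := by rw [hin]; exact Nat.mod_self _
    rw [this, Walk.getVert_zero]
    have := c.adj_getVert_succ hi
    rwa [hin, Walk.getVert_length] at this

lemma card_support_toFinset : c.support.toFinset.card = c.length := by
  rw [support_toFinset_eq hc]
  rw [Finset.card_image_of_injOn]
  · exact Finset.card_range _
  · intro i hi j hj h
    exact getVert_injOn hc i (Finset.mem_range.1 hi) j (Finset.mem_range.1 hj) h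

/-- Every vertex of a cycle has two distinct neighbors on the cycle. -/
lemma cycle_two_neighbors {v : V} (hv : v ∈ c.support) :
    ∃ y ∈ c.support, ∃ z ∈ c.support, y ≠ z ∧ G.Adj v y ∧ G.Adj v z := by
  have hn3 := hc.three_le_length
  set n := c.length with hn
  have hmem : ∀ k < n, c.getVert k ∈ c.support := by
    intro k hk
    have : c.getVert k ∈ c.support.toFinset := by
      rw [support_toFinset_eq hc]
      exact Finset.mem_image.2 ⟨k, Finset.mem_range.2 hk, rfl⟩
    exact List.mem_toFinset.1 this
  have hv' : v ∈ c.support.toFinset := List.mem_toFinset.2 hv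
  rw [support_toFinset_eq hc] at hv'
  obtain ⟨i, hi, rfl⟩ := Finset.mem_image.1 hv'
  rw [Finset.mem_range] at hi
  have hnpos : 0 < n := by omega
  refine ⟨c.getVert ((i+1) % n), hmem _ (Nat.mod_lt _ hnpos),
    c.getVert ((i + (n-1)) % n), hmem _ (Nat.mod_lt _ hnpos), ?_, ?_, ?_⟩
  · intro h
    have heq := getVert_injOn hc _ (Nat.mod_lt _ hnpos) _ (Nat.mod_lt _ hnpos) h
    have h2 : (i+1+1) % n = (i + (n-1) + 1) % n := by
      rw [← Nat.mod_add_mod, heq, Nat.mod_add_mod]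
    have h3 : i + (n-1) + 1 = i + n := by omega
    rw [h3, Nat.add_mod_right] at h2
    have h4 : i % n = i := Nat.mod_eq_of_lt hi
    rw [h4] at h2
    -- h2 : (i+2) % n = i
    have : (i+2) % n = i % n := by rw [h2, h4]
    have hdvd : n ∣ (i+2) - i := (Nat.modEq_iff_dvd' (by omega)).1 this.symm
    have : n ∣ 2 := by simpa using hdvd
    have := Nat.le_of_dvd (by norm_num) this
    omega
  · exact adj_getVert_cyc hc i hi
  · have hj : (i + (n-1)) % n < n := Nat.mod_lt _ hnpos
    have := adj_getVert_cyc hc _ hj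
    have hsucc : ((i + (n-1)) % n + 1) % n = i := by
      rw [Nat.mod_add_mod]
      have : i + (n-1) + 1 = i + n := by omega
      rw [this, Nat.add_mod_right, Nat.mod_eq_of_lt hi]
    rw [hsucc] at this
    exact this.symm

/-- The independence bound: an independent subset of a cycle's support has
size at most half the length. -/
lemma cycle_indep_bound (I : Finset V) (hIS : I ⊆ c.support.toFinset)
    (hInd : ∀ x ∈ I, ∀ y ∈ I, x ≠ y → ¬ G.Adj x y) :
    2 * I.card ≤ c.length := by
  set n := c.length with hn
  have hnpos : 0 < n := len_pos hc
  set K : Finset ℕ := (Finset.range n).filter (fun i => c.getVert i ∈ I) with hK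
  have hKsub : K ⊆ Finset.range n := Finset.filter_subset _ _
  have hinj : ∀ i ∈ K, ∀ j ∈ K, c.getVert i = c.getVert j → i = j := by
    intro i hi j hj h
    exact getVert_injOn hc i (Finset.mem_range.1 (hKsub hi)) j (Finset.mem_range.1 (hKsub hj)) h
  have hKI : K.image c.getVert = I := by
    apply Finset.Subset.antisymm
    · intro v hv
      obtain ⟨i, hi, rfl⟩ := Finset.mem_image.1 hv
      exact (Finset.mem_filter.1 hi).2
    · intro v hv
      have : v ∈ c.support.toFinset := hIS hv
      rw [support_toFinset_eq hc] at this
      obtain ⟨i, hi, rfl⟩ := Finset.mem_image.1 this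
      exact Finset.mem_image.2 ⟨i, Finset.mem_filter.2 ⟨hi, hv⟩, rfl⟩
  have hcardI : I.card = K.card := by
    rw [← hKI]; exact Finset.card_image_of_injOn hinj
  set σ : ℕ → ℕ := fun i => (i+1) % n with hσ
  set K' : Finset ℕ := K.image σ with hK'
  have hσinj : ∀ i ∈ K, ∀ j ∈ K, σ i = σ j → i = j := by
    intro i hi j hj h
    have hi' := Finset.mem_range.1 (hKsub hi)
    have hj' := Finset.mem_range.1 (hKsub hj)
    have : (σ i + (n-1)) % n = (σ j + (n-1)) % n := by rw [h]
    rw [hσ] at this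
    simp only [Nat.mod_add_mod] at this
    have e1 : i + 1 + (n-1) = i + n := by omega
    have e2 : j + 1 + (n-1) = j + n := by omega
    rw [e1, e2, Nat.add_mod_right, Nat.add_mod_right,
      Nat.mod_eq_of_lt hi', Nat.mod_eq_of_lt hj'] at this
    exact this
  have hcardK' : K'.card = K.card := Finset.card_image_of_injOn hσinj
  have hK'sub : K' ⊆ Finset.range n := by
    intro j hj
    obtain ⟨i, _, rfl⟩ := Finset.mem_image.1 hj
    exact Finset.mem_range.2 (Nat.mod_lt _ hnpos)
  have hdisj : Disjoint K K' := by
    rw [Finset.disjoint_right]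
    intro j hj' hj
    obtain ⟨i, hi, rfl⟩ := Finset.mem_image.1 hj'
    have hiK := Finset.mem_filter.1 hi
    have hjK := Finset.mem_filter.1 hj
    have hadj := adj_getVert_cyc hc i (Finset.mem_range.1 hiK.1)
    exact hInd _ hiK.2 _ hjK.2 hadj.ne hadj
  have : (K ∪ K').card ≤ n := by
    calc (K ∪ K').card ≤ (Finset.range n).card :=
          Finset.card_le_card (Finset.union_subset hKsub hK'sub)
      _ = n := Finset.card_range n
  rw [Finset.card_union_of_disjoint hdisj, hcardK'] at this
  omega




end CBAux
namespace CBAux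

/-! ### The decidable bitmask core -/

/-- Adjacency bitmasks for the Murty graph. -/
def adjN (a b : Nat) : Bool :=
  Nat.testBit ([0b00011110, 0b00011101, 0b00100011, 0b01000011, 0b10000011,
    0b11000100, 0b10101000, 0b01110000].getD a 0) b

/-- Adjacency bitmasks for K4 ⊙ K33. -/
def adjK (a b : Nat) : Bool :=
  Nat.testBit ([0b00011100, 0b00011100, 0b00100011, 0b01000011, 0b10000011,
    0b11000100, 0b10101000, 0b01110000].getD a 0) b

def cardB (m : Nat) : Nat := (List.range 8).countP m.testBit

def goodN (A : Nat → Nat → Bool) (m : Nat) : Prop :=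
  (∃ v < 8, m.testBit v) ∧
  (∀ v < 8, m.testBit v → ∃ y < 8, m.testBit y ∧ ∃ z < 8, m.testBit z ∧ y ≠ z ∧ A v y ∧ A v z) ∧
  (∀ x < 8, ∀ y < 8, ∀ z < 8, (m.testBit x ∧ m.testBit y ∧ m.testBit z ∧
    x ≠ y ∧ x ≠ z ∧ y ≠ z ∧ ¬A x y ∧ ¬A x z ∧ ¬A y z) → 6 ≤ cardB m)

instance (A) (m) : Decidable (goodN A m) := by unfold goodN; infer_instance

def noBadN (A : Nat → Nat → Bool) : Prop :=
  ∀ m₁ < 256, goodN A m₁ → ∀ m₂ < 256, (m₁ &&& m₂ = 0 ∧ goodN A m₂) →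
    ∃ v < 8, ¬(m₁ ||| m₂).testBit v ∧ ∀ w < 8, ¬(m₁ ||| m₂).testBit w → ¬A v w

instance (A) : Decidable (noBadN A) := by unfold noBadN; infer_instance

lemma noBadN_adjN : noBadN adjN := by decide

lemma noBadN_adjK : noBadN adjK := by decide

/-- Encoding a finset of `Fin 8` as a bitmask. -/
def encode (S : Finset (Fin 8)) : Nat := S.sum (fun v => 2 ^ v.val)

lemma encode_facts : ∀ S : Finset (Fin 8), encode S < 256 ∧ cardB (encode S) = S.card ∧
    ∀ v : Fin 8, ((encode S).testBit v.val ↔ v ∈ S) := by decide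

lemma encode_testBit_ge (S : Finset (Fin 8)) {i : ℕ} (hi : 8 ≤ i) :
    (encode S).testBit i = false := by
  apply Nat.testBit_eq_false_of_lt
  calc encode S < 256 := (encode_facts S).1
    _ = 2 ^ 8 := by norm_num
    _ ≤ 2 ^ i := Nat.pow_le_pow_right (by norm_num) hi

end CBAux

open CBAux in
lemma CBAux.no_conformal_bicycle {G : SimpleGraph (Fin 8)} (A : ℕ → ℕ → Bool)
    (hA : ∀ x y : Fin 8, G.Adj x y ↔ A x.val y.val = true)
    (hnb : noBadN A) : ¬ HasConformalBicycle G := by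
  rintro ⟨a, b, c₁, c₂, hcy₁, hcy₂, hdisj, M, hM, hMv⟩
  classical
  set S₁ : Finset (Fin 8) := c₁.support.toFinset with hS₁
  set S₂ : Finset (Fin 8) := c₂.support.toFinset with hS₂
  set m₁ : ℕ := encode S₁ with hm₁
  set m₂ : ℕ := encode S₂ with hm₂
  have hb₁ : ∀ v : Fin 8, (m₁.testBit v.val ↔ v ∈ c₁.support) := by
    intro v
    rw [(encode_facts S₁).2.2 v, hS₁, List.mem_toFinset]
  have hb₂ : ∀ v : Fin 8, (m₂.testBit v.val ↔ v ∈ c₂.support) := by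
    intro v
    rw [(encode_facts S₂).2.2 v, hS₂, List.mem_toFinset]
  -- a generic proof that a cycle's support gives a good mask
  have good : ∀ (x : Fin 8) (c : G.Walk x x), c.IsCycle →
      (∀ v : Fin 8, ((encode c.support.toFinset).testBit v.val ↔ v ∈ c.support)) →
      goodN A (encode c.support.toFinset) := by
    intro x c hc hb
    refine ⟨⟨x.val, x.isLt, (hb x).2 c.start_mem_support⟩, ?_, ?_⟩
    · intro v hv8 hbit
      obtain ⟨y, hy, z, hz, hyz, hvy, hvz⟩ :=
        cycle_two_neighbors hc ((hb ⟨v, hv8⟩).1 hbit)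
      refine ⟨y.val, y.isLt, (hb y).2 hy, z.val, z.isLt, (hb z).2 hz, ?_, ?_, ?_⟩
      · exact fun h => hyz (Fin.ext h)
      · exact (hA _ _).1 hvy
      · exact (hA _ _).1 hvz
    · intro p hp8 q hq8 r hr8 ⟨hbp, hbq, hbr, hpq, hpr, hqr, hApq, hApr, hAqr⟩
      set P : Fin 8 := ⟨p, hp8⟩
      set Q : Fin 8 := ⟨q, hq8⟩
      set R : Fin 8 := ⟨r, hr8⟩
      have hPQ : P ≠ Q := fun h => hpq (congrArg Fin.val h)
      have hPR : P ≠ R := fun h => hpr (congrArg Fin.val h)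
      have hQR : Q ≠ R := fun h => hqr (congrArg Fin.val h)
      have nPQ : ¬ G.Adj P Q := fun h => hApq ((hA _ _).1 h)
      have nPR : ¬ G.Adj P R := fun h => hApr ((hA _ _).1 h)
      have nQR : ¬ G.Adj Q R := fun h => hAqr ((hA _ _).1 h)
      have nQP : ¬ G.Adj Q P := fun h => nPQ h.symm
      have nRP : ¬ G.Adj R P := fun h => nPR h.symm
      have nRQ : ¬ G.Adj R Q := fun h => nQR h.symm
      have hIS : ({P, Q, R} : Finset (Fin 8)) ⊆ c.support.toFinset := by
        intro u hu
        simp only [Finset.mem_insert, Finset.mem_singleton] at hu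
        rcases hu with rfl | rfl | rfl
        · exact List.mem_toFinset.2 ((hb P).1 hbp)
        · exact List.mem_toFinset.2 ((hb Q).1 hbq)
        · exact List.mem_toFinset.2 ((hb R).1 hbr)
      have hInd : ∀ u ∈ ({P, Q, R} : Finset (Fin 8)), ∀ w ∈ ({P, Q, R} : Finset (Fin 8)),
          u ≠ w → ¬ G.Adj u w := by
        intro u hu w hw hne
        simp only [Finset.mem_insert, Finset.mem_singleton] at hu hw
        rcases hu with rfl | rfl | rfl <;> rcases hw with rfl | rfl | rfl <;>
          first
            | exact absurd rfl hne
            | assumption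
      have hbound := cycle_indep_bound hc {P, Q, R} hIS hInd
      have hcard3 : ({P, Q, R} : Finset (Fin 8)).card = 3 := by
        rw [Finset.card_insert_of_notMem (by simp [hPQ, hPR]),
          Finset.card_insert_of_notMem (by simp [hQR]), Finset.card_singleton]
      rw [hcard3] at hbound
      rw [(encode_facts c.support.toFinset).2.1, card_support_toFinset hc]
      omega
  have good₁ : goodN A m₁ := good a c₁ hcy₁ hb₁
  have good₂ : goodN A m₂ := good b c₂ hcy₂ hb₂
  have hland : m₁ &&& m₂ = 0 := by
    apply Nat.eq_of_testBit_eq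
    intro i
    rw [Nat.testBit_and, Nat.zero_testBit]
    rcases Nat.lt_or_ge i 8 with hi | hi
    · by_cases h1 : m₁.testBit i
      · have : (⟨i, hi⟩ : Fin 8) ∈ c₁.support := (hb₁ ⟨i, hi⟩).1 h1
        have h2 : (⟨i, hi⟩ : Fin 8) ∉ c₂.support := hdisj _ this
        have : m₂.testBit i = false := by
          by_contra hcon
          exact h2 ((hb₂ ⟨i, hi⟩).1 (by simpa using hcon))
        simp [this]
      · simp [Bool.eq_false_iff.2 h1]
    · have h8 : m₁.testBit i = false := encode_testBit_ge S₁ hi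
      simp [h8]
  obtain ⟨v, hv8, hnbit, hall⟩ :=
    hnb m₁ (encode_facts S₁).1 good₁ m₂ (encode_facts S₂).1 ⟨hland, good₂⟩
  set vv : Fin 8 := ⟨v, hv8⟩
  have hnot : vv ∉ c₁.support ∧ vv ∉ c₂.support := by
    rw [Nat.testBit_or] at hnbit
    constructor
    · intro h
      exact hnbit (by simp [show m₁.testBit v = true from (hb₁ vv).2 h])
    · intro h
      exact hnbit (by simp [show m₂.testBit v = true from (hb₂ vv).2 h])
  have hvM : vv ∈ M.verts := by rw [hMv]; exact hnot
  obtain ⟨w, hw, -⟩ := hM hvM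
  have hGvw : G.Adj vv w := M.adj_sub hw
  have hwM : w ∈ M.verts := hw.snd_mem
  have hwnot : w ∉ c₁.support ∧ w ∉ c₂.support := by rwa [hMv] at hwM
  have hwbit : ¬ (m₁ ||| m₂).testBit w.val := by
    rw [Nat.testBit_or]
    intro h
    rcases Bool.or_eq_true_iff.1 h with h | h
    · exact hwnot.1 ((hb₁ w).1 h)
    · exact hwnot.2 ((hb₂ w).1 h)
  exact hall w.val w.isLt hwbit ((hA vv w).1 hGvw)

instance : DecidableRel murtyGraph.Adj := fun x y =>
  decidable_of_iff _ (SimpleGraph.fromRel_adj _ x y).symm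

instance : DecidableRel K4spliceK33.Adj := fun x y =>
  decidable_of_iff _ (SimpleGraph.fromRel_adj _ x y).symm

lemma murty_adj_iff : ∀ x y : Fin 8, murtyGraph.Adj x y ↔ CBAux.adjN x.val y.val = true := by
  decide

lemma k4k33_adj_iff : ∀ x y : Fin 8, K4spliceK33.Adj x y ↔ CBAux.adjK x.val y.val = true := by
  decide

/-- Neither the Murty graph nor K4 ⊙ K33 contains a conformal bicycle. -/
theorem murty_K4spliceK33_no_conformal_bicycle :
    ¬ HasConformalBicycle murtyGraph ∧ ¬ HasConformalBicycle K4spliceK33 := by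
  constructor
  · exact CBAux.no_conformal_bicycle CBAux.adjN murty_adj_iff CBAux.noBadN_adjN
  · exact CBAux.no_conformal_bicycle CBAux.adjK k4k33_adj_iff CBAux.noBadN_adjK
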